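/- Let Δ₀ > 0, let Δ be a real random variable with no point mass at 0, independent of two i.i.d. sequences (Z⁺(u)), (Z⁻(u)) of standard normals. Define S⁺(i) = ∑_{u=1}^i Z⁺(u), S⁻(i) = ∑_{u=1}^i Z⁻(u), and p : ℤ → ℝ by p(i) = exp(Δ S⁺(i) − iΔ²/2) for i > 0, p(−i) = exp(Δ S⁻(i) − iΔ²/2) for i > 0, and p(0) = 1. Then E[W(p) · 1_{|Δ| ≥ Δ₀}] ≤ 4 ∑_{i=1}^∞ i Φ(−√i Δ₀/2) < ∞, where W(p) = ∑_{i∈ℤ} |i| min(1, p(i)). -/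

import Mathlib

open MeasureTheory ProbabilityTheory

/-- Standard normal distribution function `Φ`. -/
noncomputable def stdCDF (z : ℝ) : ℝ :=
  ∫ x in Set.Iic z, (Real.sqrt (2 * Real.pi))⁻¹ * Real.exp (-x ^ 2 / 2)

section Helpers

open Real Set NNReal ENNReal

lemma gaussianPDFReal_zero_one (x : ℝ) :
    gaussianPDFReal 0 1 x = (Real.sqrt (2 * Real.pi))⁻¹ * Real.exp (-x ^ 2 / 2) := by
  simp [gaussianPDFReal]

lemma stdCDF_nonneg (z : ℝ) : 0 ≤ stdCDF z := by
  apply setIntegral_nonneg measurableSet_Iic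
  intro x _
  positivity

lemma stdGauss_Iic (z : ℝ) : gaussianReal 0 1 (Set.Iic z) = ENNReal.ofReal (stdCDF z) := by
  rw [gaussianReal_apply_eq_integral 0 one_ne_zero]
  congr 1
  apply setIntegral_congr_fun measurableSet_Iic
  intro x _
  exact gaussianPDFReal_zero_one x

lemma gauss_neg_map : (gaussianReal 0 1).map (fun x : ℝ => -x) = gaussianReal 0 1 := by
  have h := gaussianReal_map_const_mul (μ := 0) (v := 1) (-1)
  simp only [neg_one_mul, mul_zero] at h
  have h2 : (NNReal.mk ((-1:ℝ)^2) (sq_nonneg _) * 1 : ℝ≥0) = 1 := by ext; simp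
  convert h using 2
  ext; simp

lemma stdGauss_Ici (z : ℝ) : gaussianReal 0 1 (Set.Ici z) = ENNReal.ofReal (stdCDF (-z)) := by
  rw [← stdGauss_Iic]
  conv_lhs => rw [← gauss_neg_map]
  rw [Measure.map_apply measurable_neg measurableSet_Ici]
  congr 1
  ext x
  simp

lemma gauss_singleton (v : ℝ≥0) (hv : v ≠ 0) (μ : ℝ) (z : ℝ) : gaussianReal μ v {z} = 0 :=
  gaussianReal_absolutelyContinuous μ hv (volume_singleton)

lemma stdGauss_Iio (z : ℝ) : gaussianReal 0 1 (Set.Iio z) = ENNReal.ofReal (stdCDF z) := by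
  rw [← stdGauss_Iic]
  have : Set.Iio z = Set.Iic z \ {z} := by ext x; simp [lt_iff_le_and_ne]
  rw [this, measure_diff_null (gauss_singleton 1 one_ne_zero 0 z)]

lemma stdCDF_mono {a b : ℝ} (hab : a ≤ b) : stdCDF a ≤ stdCDF b := by
  have h := measure_mono (μ := gaussianReal 0 1) (Set.Iic_subset_Iic.mpr hab)
  rw [stdGauss_Iic, stdGauss_Iic] at h
  exact (ENNReal.ofReal_le_ofReal_iff (stdCDF_nonneg b)).mp h

lemma stdCDF_le_exp {x : ℝ} (hx : 0 ≤ x) : stdCDF (-x) ≤ Real.exp (-x ^ 2 / 2) := by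
  have hstd : stdCDF (-x) = ∫ z in Set.Iic (-x), gaussianPDFReal 0 1 z := by
    apply setIntegral_congr_fun measurableSet_Iic
    intro z _
    exact (gaussianPDFReal_zero_one z).symm
  have key : ∀ z ∈ Set.Iic (-x),
      gaussianPDFReal 0 1 z ≤ Real.exp (-x ^ 2 / 2) * gaussianPDFReal (-x) 1 z := by
    intro z hz
    simp only [Set.mem_Iic] at hz
    simp only [gaussianPDFReal]
    push_cast
    rw [mul_one, mul_one, mul_comm (Real.exp (-x ^ 2 / 2)) _, mul_assoc, ← Real.exp_add]
    apply mul_le_mul_of_nonneg_left _ (by positivity)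
    apply Real.exp_le_exp.mpr
    nlinarith [mul_nonneg hx (by linarith : (0:ℝ) ≤ -(x + z))]
  rw [hstd]
  calc (∫ z in Set.Iic (-x), gaussianPDFReal 0 1 z)
      ≤ ∫ z in Set.Iic (-x), Real.exp (-x ^ 2 / 2) * gaussianPDFReal (-x) 1 z := by
        apply setIntegral_mono_on
        · exact (integrable_gaussianPDFReal 0 1).integrableOn
        · exact ((integrable_gaussianPDFReal (-x) 1).const_mul _).integrableOn
        · exact measurableSet_Iic
        · exact key
    _ ≤ ∫ z, Real.exp (-x ^ 2 / 2) * gaussianPDFReal (-x) 1 z := by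
        apply setIntegral_le_integral ((integrable_gaussianPDFReal (-x) 1).const_mul _)
        filter_upwards with z
        exact mul_nonneg (Real.exp_pos _).le (gaussianPDFReal_nonneg _ _ _)
    _ = Real.exp (-x ^ 2 / 2) := by
        rw [integral_const_mul, integral_gaussianPDFReal_eq_one _ one_ne_zero, mul_one]

lemma summable_target {Δ₀ : ℝ} (hΔ₀ : 0 < Δ₀) :
    Summable (fun i : ℕ => ((i : ℝ) + 1) * stdCDF (-(Real.sqrt ((i : ℝ) + 1) * Δ₀) / 2)) := by
  have hr : |Real.exp (-Δ₀ ^ 2 / 8)| < 1 := by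
    rw [abs_of_pos (Real.exp_pos _)]
    apply Real.exp_lt_one_iff.mpr
    nlinarith
  have hgeo : Summable (fun n : ℕ => (n : ℝ) * Real.exp (-Δ₀ ^ 2 / 8) ^ n) := by
    simpa using summable_pow_mul_geometric_of_norm_lt_one 1 hr
  have hgeo2 : Summable (fun n : ℕ => ((n : ℝ) + 1) * Real.exp (-Δ₀ ^ 2 / 8) ^ (n + 1)) := by
    have := (_root_.summable_nat_add_iff
      (f := fun n : ℕ => (n : ℝ) * Real.exp (-Δ₀ ^ 2 / 8) ^ n) 1).mpr hgeo
    simpa using this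
  apply Summable.of_nonneg_of_le _ _ hgeo2
  · intro n
    have h2 : 0 ≤ stdCDF (-(Real.sqrt ((n : ℝ) + 1) * Δ₀) / 2) := stdCDF_nonneg _
    positivity
  · intro n
    have hb : stdCDF (-(Real.sqrt ((n : ℝ) + 1) * Δ₀) / 2) ≤ Real.exp (-Δ₀ ^ 2 / 8) ^ (n+1) := by
      have hx : (0:ℝ) ≤ Real.sqrt ((n : ℝ) + 1) * Δ₀ / 2 := by positivity
      have h := stdCDF_le_exp hx
      have he : Real.exp (-(Real.sqrt ((n : ℝ) + 1) * Δ₀ / 2) ^ 2 / 2)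
          = Real.exp (-Δ₀ ^ 2 / 8) ^ (n+1) := by
        rw [← Real.exp_nat_mul]
        congr 1
        have hsq : Real.sqrt ((n : ℝ) + 1) ^ 2 = (n : ℝ) + 1 := Real.sq_sqrt (by positivity)
        field_simp
        push_cast
        nlinarith [hsq]
      rw [he] at h
      calc stdCDF (-(Real.sqrt ((n : ℝ) + 1) * Δ₀) / 2)
          = stdCDF (-(Real.sqrt ((n : ℝ) + 1) * Δ₀ / 2)) := by ring_nf
        _ ≤ _ := h
    have h1 : (0:ℝ) ≤ (n:ℝ) + 1 := by positivity
    exact mul_le_mul_of_nonneg_left hb h1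

lemma pdf_conv (a b : ℝ≥0) (ha : a ≠ 0) (hb : b ≠ 0) (x z : ℝ) :
    gaussianPDFReal 0 a x * gaussianPDFReal x b z
      = gaussianPDFReal 0 (a + b) z
        * gaussianPDFReal ((a : ℝ) * z / ((a : ℝ) + b)) (a * b / (a + b)) x := by
  have ha' : (0:ℝ) < a := lt_of_le_of_ne a.coe_nonneg (by exact_mod_cast (Ne.symm ha))
  have hb' : (0:ℝ) < b := lt_of_le_of_ne b.coe_nonneg (by exact_mod_cast (Ne.symm hb))
  simp only [gaussianPDFReal]
  push_cast
  have hc : (Real.sqrt (2 * π * a))⁻¹ * (Real.sqrt (2 * π * b))⁻¹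
      = (Real.sqrt (2 * π * ((a:ℝ) + b)))⁻¹
        * (Real.sqrt (2 * π * ((a:ℝ) * b / ((a:ℝ) + b))))⁻¹ := by
    rw [← mul_inv, ← mul_inv, ← Real.sqrt_mul (by positivity), ← Real.sqrt_mul (by positivity)]
    congr 1
    field_simp
  have hexp : Real.exp (-(x - 0) ^ 2 / (2 * (a:ℝ))) * Real.exp (-(z - x) ^ 2 / (2 * (b:ℝ)))
      = Real.exp (-(z - 0) ^ 2 / (2 * ((a:ℝ) + b)))
        * Real.exp (-(x - (a:ℝ) * z / ((a:ℝ) + b)) ^ 2 / (2 * ((a:ℝ) * b / ((a:ℝ) + b)))) := by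
    rw [← Real.exp_add, ← Real.exp_add]
    congr 1
    field_simp
    ring
  rw [mul_mul_mul_comm, hc, mul_mul_mul_comm]
  linear_combination (Real.sqrt (2 * π * ((a:ℝ) + b)))⁻¹
    * (Real.sqrt (2 * π * ((a:ℝ) * b / ((a:ℝ) + b))))⁻¹ * hexp

lemma measurable_gaussianPDF_pair (b : ℝ≥0) :
    Measurable (fun q : ℝ × ℝ => gaussianPDF q.1 b q.2) := by
  apply Measurable.ennreal_ofReal
  simp only [gaussianPDFReal]
  fun_prop

lemma gauss_conv (a b : ℝ≥0) (ha : a ≠ 0) (hb : b ≠ 0) :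
    Measure.map (fun p : ℝ × ℝ => p.1 + p.2) ((gaussianReal 0 a).prod (gaussianReal 0 b))
      = gaussianReal 0 (a + b) := by
  have ha' : (0:ℝ) < a := lt_of_le_of_ne a.coe_nonneg (by exact_mod_cast (Ne.symm ha))
  have hb' : (0:ℝ) < b := lt_of_le_of_ne b.coe_nonneg (by exact_mod_cast (Ne.symm hb))
  have hab : a + b ≠ 0 := by
    rw [← NNReal.coe_ne_zero]; push_cast; positivity
  have hmid : a * b / (a + b) ≠ 0 := by
    rw [← NNReal.coe_ne_zero]; push_cast; positivity
  ext s hs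
  rw [Measure.map_apply measurable_add hs, Measure.prod_apply (measurable_add hs)]
  have hsec : ∀ x : ℝ, (gaussianReal 0 b) (Prod.mk x ⁻¹' ((fun p : ℝ × ℝ => p.1 + p.2) ⁻¹' s))
      = ∫⁻ z in s, gaussianPDF x b z := by
    intro x
    have hpre : Prod.mk x ⁻¹' ((fun p : ℝ × ℝ => p.1 + p.2) ⁻¹' s)
        = (fun y => x + y) ⁻¹' s := rfl
    rw [hpre, ← Measure.map_apply (measurable_const_add x) hs, gaussianReal_map_const_add,
      zero_add, gaussianReal_apply x hb]
  simp_rw [hsec]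
  rw [gaussianReal_of_var_ne_zero 0 ha, lintegral_withDensity_eq_lintegral_mul _
    (measurable_gaussianPDF 0 a)
    ((measurable_gaussianPDF_pair b).lintegral_prod_right')]
  simp only [Pi.mul_apply]
  calc ∫⁻ x, gaussianPDF 0 a x * ∫⁻ z in s, gaussianPDF x b z ∂volume ∂volume
      = ∫⁻ x, ∫⁻ z in s, gaussianPDF 0 a x * gaussianPDF x b z ∂volume ∂volume := by
        congr 1; ext x
        exact (lintegral_const_mul _ (measurable_gaussianPDF x b)).symm
    _ = ∫⁻ z in s, ∫⁻ x, gaussianPDF 0 a x * gaussianPDF x b z ∂volume ∂volume := by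
        rw [lintegral_lintegral_swap]
        refine AEMeasurable.mul (f := fun p : ℝ × ℝ => gaussianPDF 0 a p.1)
          (g := fun p : ℝ × ℝ => gaussianPDF p.1 b p.2) ?_ ?_
        · exact ((measurable_gaussianPDF 0 a).comp measurable_fst).aemeasurable
        · exact ((measurable_gaussianPDF_pair b).comp
            (measurable_fst.prodMk measurable_snd)).aemeasurable
    _ = ∫⁻ z in s, gaussianPDF 0 (a + b) z ∂volume := by
        apply setLIntegral_congr_fun hs
        intro z _
        have hpt : ∀ x : ℝ, gaussianPDF 0 a x * gaussianPDF x b z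
            = gaussianPDF 0 (a + b) z
              * gaussianPDF ((a : ℝ) * z / ((a : ℝ) + b)) (a * b / (a + b)) x := by
          intro x
          simp only [gaussianPDF]
          rw [← ENNReal.ofReal_mul (gaussianPDFReal_nonneg _ _ _),
            ← ENNReal.ofReal_mul (gaussianPDFReal_nonneg _ _ _), pdf_conv a b ha hb]
        simp_rw [hpt]
        rw [lintegral_const_mul _ (measurable_gaussianPDF _ _),
          lintegral_gaussianPDF_eq_one _ hmid, mul_one]
    _ = gaussianReal 0 (a + b) s := (gaussianReal_apply 0 hab s).symm

lemma map_add_of_indep {Ω : Type*} [MeasurableSpace Ω] {P : Measure Ω} [IsProbabilityMeasure P]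
    {X Y : Ω → ℝ} (hX : Measurable X) (hY : Measurable Y) (h : IndepFun X Y P)
    {a b : ℝ≥0} (ham : P.map X = gaussianReal 0 a) (hbm : P.map Y = gaussianReal 0 b)
    (ha : a ≠ 0) (hb : b ≠ 0) :
    P.map (fun ω => X ω + Y ω) = gaussianReal 0 (a + b) := by
  have hprod : P.map (fun ω => (X ω, Y ω)) = (gaussianReal 0 a).prod (gaussianReal 0 b) := by
    rw [← ham, ← hbm]
    exact (indepFun_iff_map_prod_eq_prod_map_map hX.aemeasurable hY.aemeasurable).mp h
  have hc : (fun ω => X ω + Y ω) = (fun p : ℝ × ℝ => p.1 + p.2) ∘ (fun ω => (X ω, Y ω)) := rfl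
  rw [hc, ← Measure.map_map measurable_add (hX.prodMk hY), hprod, gauss_conv a b ha hb]

lemma min_exp_measurable (t c : ℝ) :
    Measurable (fun z : ℝ => ENNReal.ofReal (min 1 (Real.exp (t * z - c)))) := by
  fun_prop

lemma core_pos (t : ℝ) (ht : 0 < t) :
    ∫⁻ z, ENNReal.ofReal (min 1 (Real.exp (t * z - t ^ 2 / 2))) ∂(gaussianReal 0 1)
      = ENNReal.ofReal (2 * stdCDF (-t / 2)) := by
  rw [gaussianReal_of_var_ne_zero 0 one_ne_zero,
    lintegral_withDensity_eq_lintegral_mul _ (measurable_gaussianPDF 0 1)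
      (min_exp_measurable t (t ^ 2 / 2))]
  simp only [Pi.mul_apply]
  rw [← lintegral_add_compl _ (measurableSet_Ici (a := t / 2)), compl_Ici]
  have h1 : ∫⁻ z in Set.Ici (t / 2),
      gaussianPDF 0 1 z * ENNReal.ofReal (min 1 (Real.exp (t * z - t ^ 2 / 2))) ∂volume
      = ENNReal.ofReal (stdCDF (-(t / 2))) := by
    rw [setLIntegral_congr_fun measurableSet_Ici
      (fun z hz => by
        have hexp : (1:ℝ) ≤ Real.exp (t * z - t ^ 2 / 2) := by
          rw [← Real.exp_zero]
          apply Real.exp_le_exp.mpr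
          have : t * (t / 2) ≤ t * z := by
            apply mul_le_mul_of_nonneg_left hz.out ht.le
          nlinarith
        rw [min_eq_left hexp, ENNReal.ofReal_one, mul_one])]
    rw [← gaussianReal_apply 0 one_ne_zero, stdGauss_Ici]
  have h2 : ∫⁻ z in Set.Iio (t / 2),
      gaussianPDF 0 1 z * ENNReal.ofReal (min 1 (Real.exp (t * z - t ^ 2 / 2))) ∂volume
      = ENNReal.ofReal (stdCDF (-(t / 2))) := by
    have hpt : ∀ z : ℝ, z ∈ Set.Iio (t / 2) →
        gaussianPDF 0 1 z * ENNReal.ofReal (min 1 (Real.exp (t * z - t ^ 2 / 2)))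
          = gaussianPDF t 1 z := by
      intro z hz
      have hexp : Real.exp (t * z - t ^ 2 / 2) ≤ 1 := by
        rw [← Real.exp_zero]
        apply Real.exp_le_exp.mpr
        have : t * z ≤ t * (t / 2) := mul_le_mul_of_nonneg_left hz.out.le ht.le
        nlinarith
      rw [min_eq_right hexp, gaussianPDF, gaussianPDF,
        ← ENNReal.ofReal_mul (gaussianPDFReal_nonneg _ _ _)]
      congr 1
      simp only [gaussianPDFReal]
      rw [mul_assoc, ← Real.exp_add]
      congr 2
      push_cast
      ring
    rw [setLIntegral_congr_fun measurableSet_Iio hpt]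
    have hmap : gaussianReal t 1 = (gaussianReal 0 1).map (· + t) := by
      rw [gaussianReal_map_add_const, zero_add]
    calc ∫⁻ z in Set.Iio (t / 2), gaussianPDF t 1 z ∂volume
        = gaussianReal t 1 (Set.Iio (t / 2)) := (gaussianReal_apply t one_ne_zero _).symm
      _ = gaussianReal 0 1 ((· + t) ⁻¹' Set.Iio (t / 2)) := by
          rw [hmap, Measure.map_apply (measurable_add_const t) measurableSet_Iio]
      _ = gaussianReal 0 1 (Set.Iio (-(t / 2))) := by
          congr 1
          ext x
          simp only [Set.mem_preimage, Set.mem_Iio]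
          constructor <;> intro h <;> linarith
      _ = ENNReal.ofReal (stdCDF (-(t / 2))) := stdGauss_Iio _
  rw [h1, h2, ← ENNReal.ofReal_add (stdCDF_nonneg _) (stdCDF_nonneg _)]
  congr 1
  have : -(t / 2) = -t / 2 := by ring
  rw [this]
  ring

lemma core_ne (t : ℝ) (ht : t ≠ 0) :
    ∫⁻ z, ENNReal.ofReal (min 1 (Real.exp (t * z - t ^ 2 / 2))) ∂(gaussianReal 0 1)
      = ENNReal.ofReal (2 * stdCDF (-|t| / 2)) := by
  rcases lt_or_gt_of_ne ht with hneg | hpos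
  · have h := core_pos (-t) (by linarith)
    rw [← gauss_neg_map, lintegral_map (min_exp_measurable t (t ^ 2 / 2)) measurable_neg]
    have : ∀ z : ℝ, t * (-z) - t ^ 2 / 2 = (-t) * z - (-t) ^ 2 / 2 := by intro z; ring
    simp_rw [this]
    rw [h, abs_of_neg hneg]
  · rw [core_pos t hpos, abs_of_pos hpos]

lemma inner_bound {Δ₀ : ℝ} (hΔ₀ : 0 < Δ₀) (n : ℕ) (hn : n ≠ 0) (δ : ℝ) (hδ : Δ₀ ≤ |δ|) :
    ∫⁻ s, ENNReal.ofReal (min 1 (Real.exp (δ * s - n * δ ^ 2 / 2))) ∂(gaussianReal 0 (n : ℝ≥0))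
      ≤ ENNReal.ofReal (2 * stdCDF (-(Real.sqrt n * Δ₀) / 2)) := by
  have hn' : (0:ℝ) < n := by exact_mod_cast Nat.pos_of_ne_zero hn
  have hmap : gaussianReal 0 (n : ℝ≥0) = (gaussianReal 0 1).map (fun x => Real.sqrt n * x) := by
    rw [gaussianReal_map_const_mul, mul_zero]
    congr 1
    ext
    push_cast
    rw [Real.sq_sqrt hn'.le, mul_one]
  set t := δ * Real.sqrt n with htdef
  have ht : t ≠ 0 := by
    have hs : Real.sqrt n ≠ 0 := by positivity
    intro h
    rcases mul_eq_zero.mp h with h | h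
    · rw [h] at hδ; simp at hδ; linarith
    · exact hs h
  have habs : |t| = |δ| * Real.sqrt n := by
    rw [abs_mul, abs_of_nonneg (Real.sqrt_nonneg _)]
  rw [hmap, lintegral_map (min_exp_measurable δ ((n:ℝ) * δ ^ 2 / 2)) (measurable_const_mul _)]
  have heq : ∀ z : ℝ, δ * (Real.sqrt n * z) - (n:ℝ) * δ ^ 2 / 2 = t * z - t ^ 2 / 2 := by
    intro z
    rw [htdef]
    have : (Real.sqrt n) ^ 2 = (n:ℝ) := Real.sq_sqrt hn'.le
    nlinarith [this]
  simp_rw [heq]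
  rw [core_ne t ht]
  apply ENNReal.ofReal_le_ofReal
  have hmono : stdCDF (-|t| / 2) ≤ stdCDF (-(Real.sqrt n * Δ₀) / 2) := by
    apply stdCDF_mono
    rw [habs]
    nlinarith [mul_le_mul_of_nonneg_left hδ (Real.sqrt_nonneg (n:ℝ))]
  linarith

lemma term_bound {Ω : Type*} [MeasurableSpace Ω] (P : Measure Ω) [IsProbabilityMeasure P]
    {D S : Ω → ℝ} (hD : Measurable D) (hS : Measurable S) (hind : IndepFun S D P)
    (n : ℕ) (hn : n ≠ 0) (hlaw : P.map S = gaussianReal 0 (n : ℝ≥0))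
    {Δ₀ : ℝ} (hΔ₀ : 0 < Δ₀) :
    ∫⁻ ω in {ω | Δ₀ ≤ |D ω|},
        ENNReal.ofReal (min 1 (Real.exp (D ω * S ω - n * D ω ^ 2 / 2))) ∂P
      ≤ ENNReal.ofReal (2 * stdCDF (-(Real.sqrt n * Δ₀) / 2)) := by
  classical
  set g : ℝ × ℝ → ℝ≥0∞ := fun p =>
    if Δ₀ ≤ |p.1| then ENNReal.ofReal (min 1 (Real.exp (p.1 * p.2 - n * p.1 ^ 2 / 2))) else 0
    with hg
  have hgmeas : Measurable g := by
    apply Measurable.ite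
    · exact measurableSet_le measurable_const measurable_fst.abs
    · fun_prop
    · exact measurable_const
  have hA : MeasurableSet {ω | Δ₀ ≤ |D ω|} :=
    measurableSet_le measurable_const hD.abs
  have step1 : ∫⁻ ω in {ω | Δ₀ ≤ |D ω|},
      ENNReal.ofReal (min 1 (Real.exp (D ω * S ω - n * D ω ^ 2 / 2))) ∂P
      = ∫⁻ ω, g (D ω, S ω) ∂P := by
    rw [← lintegral_indicator hA]
    apply lintegral_congr
    intro ω
    rw [Set.indicator_apply]
    simp only [hg, Set.mem_setOf_eq]
  have hpair : P.map (fun ω => (D ω, S ω)) = (P.map D).prod (gaussianReal 0 (n : ℝ≥0)) := by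
    rw [← hlaw]
    exact (indepFun_iff_map_prod_eq_prod_map_map hD.aemeasurable hS.aemeasurable).mp hind.symm
  have : IsProbabilityMeasure (P.map D) := Measure.isProbabilityMeasure_map hD.aemeasurable
  rw [step1, ← lintegral_map hgmeas (hD.prodMk hS), hpair,
    lintegral_prod _ hgmeas.aemeasurable]
  calc ∫⁻ δ, ∫⁻ s, g (δ, s) ∂(gaussianReal 0 (n : ℝ≥0)) ∂(P.map D)
      ≤ ∫⁻ _, ENNReal.ofReal (2 * stdCDF (-(Real.sqrt n * Δ₀) / 2)) ∂(P.map D) := by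
        apply lintegral_mono
        intro δ
        by_cases hδ : Δ₀ ≤ |δ|
        · simp only [hg, hδ, if_true]
          exact inner_bound hΔ₀ n hn δ hδ
        · simp only [hg, hδ, if_false]
          simp
    _ = ENNReal.ofReal (2 * stdCDF (-(Real.sqrt n * Δ₀) / 2)) := by
        rw [lintegral_const, measure_univ, mul_one]

end Helpers

/-- With `Δ = D` a random variable with no atom at `0`, independent of two
i.i.d. standard normal sequences `Zp, Zm` with partial sums `S⁺, S⁻`, and `p : ℤ → ℝ`
the two-sided likelihood profile, `E[W(p) 1_{|D| ≥ Δ₀}] ≤ 4 ∑_{i ≥ 1} i Φ(−√i Δ₀/2) < ∞`,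
where `W(p) = ∑_{i ∈ ℤ} |i| min(1, p i)`. -/
theorem expected_W_le {Ω : Type*} [MeasurableSpace Ω]
    (P : Measure Ω) [IsProbabilityMeasure P]
    (D : Ω → ℝ) (Zp Zm : ℕ → Ω → ℝ)
    (hDmeas : Measurable D) (hZpmeas : ∀ u, Measurable (Zp u))
    (hZmmeas : ∀ u, Measurable (Zm u))
    (hindep : iIndepFun
      (Sum.elim Zp (Sum.elim Zm (fun _ : Unit => D))) P)
    (hdistp : ∀ u, P.map (Zp u) = gaussianReal 0 1)
    (hdistm : ∀ u, P.map (Zm u) = gaussianReal 0 1)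
    (hnoatom : P {ω | D ω = 0} = 0)
    (Δ₀ : ℝ) (hΔ₀ : 0 < Δ₀) :
    (∫ ω in {ω | Δ₀ ≤ |D ω|},
        (∑' i : ℤ, |(i : ℝ)| * min 1
          (if 0 < i then
            Real.exp (D ω * (∑ u ∈ Finset.range i.toNat, Zp u ω) - (i : ℝ) * (D ω) ^ 2 / 2)
          else if i < 0 then
            Real.exp (D ω * (∑ u ∈ Finset.range (-i).toNat, Zm u ω) - (-i : ℝ) * (D ω) ^ 2 / 2)
          else 1)) ∂P)
      ≤ 4 * ∑' i : ℕ, ((i : ℝ) + 1) * stdCDF (-(Real.sqrt ((i : ℝ) + 1) * Δ₀) / 2) ∧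
    Summable (fun i : ℕ => ((i : ℝ) + 1) * stdCDF (-(Real.sqrt ((i : ℝ) + 1) * Δ₀) / 2)) := by
  classical
  have hsummable := summable_target hΔ₀
  refine ⟨?_, hsummable⟩
  set A : Set Ω := {ω | Δ₀ ≤ |D ω|} with hAdef
  set C : ℝ := ∑' i : ℕ, ((i : ℝ) + 1) * stdCDF (-(Real.sqrt ((i : ℝ) + 1) * Δ₀) / 2) with hCdef
  have hCnonneg : 0 ≤ C :=
    tsum_nonneg (fun n => mul_nonneg (by positivity) (stdCDF_nonneg _))
  set term : ℤ → Ω → ℝ := fun i ω => |(i : ℝ)| * min 1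
          (if 0 < i then
            Real.exp (D ω * (∑ u ∈ Finset.range i.toNat, Zp u ω) - (i : ℝ) * (D ω) ^ 2 / 2)
          else if i < 0 then
            Real.exp (D ω * (∑ u ∈ Finset.range (-i).toNat, Zm u ω) - (-i : ℝ) * (D ω) ^ 2 / 2)
          else 1) with hterm
  show (∫ ω in A, (∑' i : ℤ, term i ω) ∂P) ≤ 4 * C
  -- basic facts about `term`
  have htermnn : ∀ (i : ℤ) (ω : Ω), 0 ≤ term i ω := by
    intro i ω
    apply mul_nonneg (abs_nonneg _)
    apply le_min zero_le_one
    split_ifs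
    · exact (Real.exp_pos _).le
    · exact (Real.exp_pos _).le
    · exact zero_le_one
  have hSpmeas : ∀ n : ℕ, Measurable (fun ω => ∑ u ∈ Finset.range n, Zp u ω) :=
    fun n => Finset.measurable_sum _ (fun u _ => hZpmeas u)
  have hSmmeas : ∀ n : ℕ, Measurable (fun ω => ∑ u ∈ Finset.range n, Zm u ω) :=
    fun n => Finset.measurable_sum _ (fun u _ => hZmmeas u)
  have htermmeas : ∀ i : ℤ, Measurable (fun ω => ENNReal.ofReal (term i ω)) := by
    intro i
    apply Measurable.ennreal_ofReal
    apply Measurable.const_mul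
    apply Measurable.min measurable_const
    split_ifs
    · exact ((hDmeas.mul (hSpmeas _)).sub
        ((measurable_const.mul (hDmeas.pow_const 2)).div_const 2)).exp
    · exact ((hDmeas.mul (hSmmeas _)).sub
        ((measurable_const.mul (hDmeas.pow_const 2)).div_const 2)).exp
    · exact measurable_const
  -- independence plumbing
  set F := Sum.elim Zp (Sum.elim Zm (fun _ : Unit => D)) with hF
  have hFmeas : ∀ i, Measurable (F i) := by
    rintro (u | u | u)
    · exact hZpmeas u
    · exact hZmmeas u
    · exact hDmeas
  have hSindp : ∀ n : ℕ, IndepFun (fun ω => ∑ u ∈ Finset.range n, Zp u ω) (Zp n) P := by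
    intro n
    have hnot : (Sum.inl n : ℕ ⊕ (ℕ ⊕ Unit)) ∉ (Finset.range n).image Sum.inl := by simp
    have h := hindep.indepFun_finsetSum_of_notMem hFmeas hnot
    have hsum : (∑ j ∈ (Finset.range n).image Sum.inl, F j)
        = fun ω => ∑ u ∈ Finset.range n, Zp u ω := by
      rw [Finset.sum_image (by intro x _ y _ h; exact Sum.inl_injective h)]
      ext ω
      rw [Finset.sum_apply]
      rfl
    rw [hsum] at h
    exact h
  have hSDp : ∀ n : ℕ, IndepFun (fun ω => ∑ u ∈ Finset.range n, Zp u ω) D P := by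
    intro n
    have hnot : (Sum.inr (Sum.inr ()) : ℕ ⊕ (ℕ ⊕ Unit)) ∉ (Finset.range n).image Sum.inl := by
      simp
    have h := hindep.indepFun_finsetSum_of_notMem hFmeas hnot
    have hsum : (∑ j ∈ (Finset.range n).image Sum.inl, F j)
        = fun ω => ∑ u ∈ Finset.range n, Zp u ω := by
      rw [Finset.sum_image (by intro x _ y _ h; exact Sum.inl_injective h)]
      ext ω
      rw [Finset.sum_apply]
      rfl
    rw [hsum] at h
    exact h
  have hSindm : ∀ n : ℕ, IndepFun (fun ω => ∑ u ∈ Finset.range n, Zm u ω) (Zm n) P := by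
    intro n
    have hnot : (Sum.inr (Sum.inl n) : ℕ ⊕ (ℕ ⊕ Unit))
        ∉ (Finset.range n).image (fun u => Sum.inr (Sum.inl u)) := by simp
    have h := hindep.indepFun_finsetSum_of_notMem hFmeas hnot
    have hsum : (∑ j ∈ (Finset.range n).image (fun u : ℕ => (Sum.inr (Sum.inl u) : ℕ ⊕ (ℕ ⊕ Unit))), F j)
        = fun ω => ∑ u ∈ Finset.range n, Zm u ω := by
      rw [Finset.sum_image (by intro x _ y _ h; simpa using h)]
      ext ω
      rw [Finset.sum_apply]
      rfl
    rw [hsum] at h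
    exact h
  have hSDm : ∀ n : ℕ, IndepFun (fun ω => ∑ u ∈ Finset.range n, Zm u ω) D P := by
    intro n
    have hnot : (Sum.inr (Sum.inr ()) : ℕ ⊕ (ℕ ⊕ Unit))
        ∉ (Finset.range n).image (fun u => Sum.inr (Sum.inl u)) := by simp
    have h := hindep.indepFun_finsetSum_of_notMem hFmeas hnot
    have hsum : (∑ j ∈ (Finset.range n).image (fun u : ℕ => (Sum.inr (Sum.inl u) : ℕ ⊕ (ℕ ⊕ Unit))), F j)
        = fun ω => ∑ u ∈ Finset.range n, Zm u ω := by
      rw [Finset.sum_image (by intro x _ y _ h; simpa using h)]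
      ext ω
      rw [Finset.sum_apply]
      rfl
    rw [hsum] at h
    exact h
  -- laws of partial sums
  have hSlawp : ∀ n : ℕ, P.map (fun ω => ∑ u ∈ Finset.range (n+1), Zp u ω)
      = gaussianReal 0 ((n+1 : ℕ) : NNReal) := by
    intro n
    induction n with
    | zero =>
      have h0 : (fun ω => ∑ u ∈ Finset.range 1, Zp u ω) = Zp 0 := by
        ext ω; simp
      rw [h0, hdistp 0]
      norm_num
    | succ n ih =>
      have hsplit : (fun ω => ∑ u ∈ Finset.range (n+2), Zp u ω)
          = fun ω => (∑ u ∈ Finset.range (n+1), Zp u ω) + Zp (n+1) ω := by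
        ext ω; rw [Finset.sum_range_succ]
      rw [hsplit]
      have h := map_add_of_indep (hSpmeas (n+1)) (hZpmeas (n+1))
        (hSindp (n+1)) ih (hdistp (n+1)) (by positivity) one_ne_zero
      rw [h]
      congr 1
      push_cast
      ring
  have hSlawm : ∀ n : ℕ, P.map (fun ω => ∑ u ∈ Finset.range (n+1), Zm u ω)
      = gaussianReal 0 ((n+1 : ℕ) : NNReal) := by
    intro n
    induction n with
    | zero =>
      have h0 : (fun ω => ∑ u ∈ Finset.range 1, Zm u ω) = Zm 0 := by
        ext ω; simp
      rw [h0, hdistm 0]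
      norm_num
    | succ n ih =>
      have hsplit : (fun ω => ∑ u ∈ Finset.range (n+2), Zm u ω)
          = fun ω => (∑ u ∈ Finset.range (n+1), Zm u ω) + Zm (n+1) ω := by
        ext ω; rw [Finset.sum_range_succ]
      rw [hsplit]
      have h := map_add_of_indep (hSmmeas (n+1)) (hZmmeas (n+1))
        (hSindm (n+1)) ih (hdistm (n+1)) (by positivity) one_ne_zero
      rw [h]
      congr 1
      push_cast
      ring
  -- per-term bounds
  have hBnd : ∀ n : ℕ, ENNReal.ofReal (((n:ℝ)+1)
        * (2 * stdCDF (-(Real.sqrt (((n+1:ℕ):ℝ)) * Δ₀) / 2)))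
      = ENNReal.ofReal (2 * (((n:ℝ)+1) * stdCDF (-(Real.sqrt ((n:ℝ)+1) * Δ₀) / 2))) := by
    intro n
    congr 1
    push_cast
    ring
  have hTpos : ∀ n : ℕ, (∫⁻ ω in A, ENNReal.ofReal (term ((n:ℤ)+1) ω) ∂P)
      ≤ ENNReal.ofReal (2 * (((n:ℝ)+1) * stdCDF (-(Real.sqrt ((n:ℝ)+1) * Δ₀) / 2))) := by
    intro n
    have hterm_eq : ∀ ω, term ((n:ℤ)+1) ω
        = ((n:ℝ)+1) * min 1 (Real.exp (D ω * (∑ u ∈ Finset.range (n+1), Zp u ω)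
            - ((n+1:ℕ):ℝ) * D ω ^ 2 / 2)) := by
      intro ω
      simp only [hterm]
      rw [if_pos (by positivity : (0:ℤ) < (n:ℤ)+1)]
      have h1 : ((n:ℤ)+1).toNat = n+1 := by omega
      have h2 : |(((n:ℤ)+1 : ℤ) : ℝ)| = (n:ℝ)+1 := by
        push_cast
        rw [abs_of_nonneg (by positivity)]
      rw [h1, h2]
      norm_num
    simp_rw [hterm_eq]
    have hc : (0:ℝ) ≤ (n:ℝ)+1 := by positivity
    calc ∫⁻ ω in A, ENNReal.ofReal (((n:ℝ)+1) * min 1 (Real.exp (D ω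
            * (∑ u ∈ Finset.range (n+1), Zp u ω) - ((n+1:ℕ):ℝ) * D ω ^ 2 / 2))) ∂P
        = ENNReal.ofReal ((n:ℝ)+1) * ∫⁻ ω in A, ENNReal.ofReal (min 1 (Real.exp (D ω
            * (∑ u ∈ Finset.range (n+1), Zp u ω) - ((n+1:ℕ):ℝ) * D ω ^ 2 / 2))) ∂P := by
          simp_rw [ENNReal.ofReal_mul hc]
          rw [lintegral_const_mul' _ _ ENNReal.ofReal_ne_top]
      _ ≤ ENNReal.ofReal ((n:ℝ)+1)
            * ENNReal.ofReal (2 * stdCDF (-(Real.sqrt (((n+1:ℕ):ℝ)) * Δ₀) / 2)) := by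
          apply mul_le_mul_right
          exact term_bound P hDmeas (hSpmeas (n+1)) (hSDp (n+1)) (n+1)
            (Nat.succ_ne_zero n) (hSlawp n) hΔ₀
      _ = ENNReal.ofReal (2 * (((n:ℝ)+1) * stdCDF (-(Real.sqrt ((n:ℝ)+1) * Δ₀) / 2))) := by
          rw [← ENNReal.ofReal_mul hc]
          exact hBnd n
  have hTneg : ∀ n : ℕ, (∫⁻ ω in A, ENNReal.ofReal (term (-((n:ℤ)+1)) ω) ∂P)
      ≤ ENNReal.ofReal (2 * (((n:ℝ)+1) * stdCDF (-(Real.sqrt ((n:ℝ)+1) * Δ₀) / 2))) := by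
    intro n
    have hterm_eq : ∀ ω, term (-((n:ℤ)+1)) ω
        = ((n:ℝ)+1) * min 1 (Real.exp (D ω * (∑ u ∈ Finset.range (n+1), Zm u ω)
            - ((n+1:ℕ):ℝ) * D ω ^ 2 / 2)) := by
      intro ω
      simp only [hterm]
      rw [if_neg (by omega : ¬ (0:ℤ) < -((n:ℤ)+1)),
        if_pos (by omega : -((n:ℤ)+1) < 0)]
      have h1 : (-(-((n:ℤ)+1))).toNat = n+1 := by omega
      have h2 : |((-((n:ℤ)+1) : ℤ) : ℝ)| = (n:ℝ)+1 := by
        push_cast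
        rw [abs_neg, abs_of_nonneg (by positivity)]
      have h3 : (-(-(((n:ℤ)+1) : ℝ))) = ((n+1:ℕ):ℝ) := by push_cast; ring
      rw [h1, h2]
      push_cast
      norm_num
    simp_rw [hterm_eq]
    have hc : (0:ℝ) ≤ (n:ℝ)+1 := by positivity
    calc ∫⁻ ω in A, ENNReal.ofReal (((n:ℝ)+1) * min 1 (Real.exp (D ω
            * (∑ u ∈ Finset.range (n+1), Zm u ω) - ((n+1:ℕ):ℝ) * D ω ^ 2 / 2))) ∂P
        = ENNReal.ofReal ((n:ℝ)+1) * ∫⁻ ω in A, ENNReal.ofReal (min 1 (Real.exp (D ω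
            * (∑ u ∈ Finset.range (n+1), Zm u ω) - ((n+1:ℕ):ℝ) * D ω ^ 2 / 2))) ∂P := by
          simp_rw [ENNReal.ofReal_mul hc]
          rw [lintegral_const_mul' _ _ ENNReal.ofReal_ne_top]
      _ ≤ ENNReal.ofReal ((n:ℝ)+1)
            * ENNReal.ofReal (2 * stdCDF (-(Real.sqrt (((n+1:ℕ):ℝ)) * Δ₀) / 2)) := by
          apply mul_le_mul_right
          exact term_bound P hDmeas (hSmmeas (n+1)) (hSDm (n+1)) (n+1)
            (Nat.succ_ne_zero n) (hSlawm n) hΔ₀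
      _ = ENNReal.ofReal (2 * (((n:ℝ)+1) * stdCDF (-(Real.sqrt ((n:ℝ)+1) * Δ₀) / 2))) := by
          rw [← ENNReal.ofReal_mul hc]
          exact hBnd n
  have hT0 : ∫⁻ ω in A, ENNReal.ofReal (term 0 ω) ∂P = 0 := by
    have : ∀ ω, term (0:ℤ) ω = 0 := by
      intro ω
      simp [hterm]
    simp_rw [this]
    simp
  -- tsum of the half sums
  have hhalf : ∑' n : ℕ, ENNReal.ofReal (2 * (((n:ℝ)+1)
      * stdCDF (-(Real.sqrt ((n:ℝ)+1) * Δ₀) / 2))) = ENNReal.ofReal (2 * C) := by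
    rw [← ENNReal.ofReal_tsum_of_nonneg]
    · congr 1
      rw [hCdef, tsum_mul_left]
    · intro n
      have := stdCDF_nonneg (-(Real.sqrt ((n:ℝ)+1) * Δ₀) / 2)
      positivity
    · exact hsummable.mul_left 2
  -- main lintegral bound
  have hkey : ∫⁻ ω in A, ENNReal.ofReal (∑' i : ℤ, term i ω) ∂P ≤ ENNReal.ofReal (4 * C) := by
    calc ∫⁻ ω in A, ENNReal.ofReal (∑' i : ℤ, term i ω) ∂P
        ≤ ∫⁻ ω in A, ∑' i : ℤ, ENNReal.ofReal (term i ω) ∂P := by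
          apply lintegral_mono
          intro ω
          show ENNReal.ofReal (∑' i : ℤ, term i ω) ≤ ∑' i : ℤ, ENNReal.ofReal (term i ω)
          by_cases hsum : Summable (fun i : ℤ => term i ω)
          · rw [ENNReal.ofReal_tsum_of_nonneg (fun i => htermnn i ω) hsum]
          · rw [tsum_eq_zero_of_not_summable hsum]
            simp
      _ = ∑' i : ℤ, ∫⁻ ω in A, ENNReal.ofReal (term i ω) ∂P :=
          lintegral_tsum (fun i => (htermmeas i).aemeasurable)
      _ = (∑' n : ℕ, ∫⁻ ω in A, ENNReal.ofReal (term ((n:ℤ)+1) ω) ∂P)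
            + (∫⁻ ω in A, ENNReal.ofReal (term 0 ω) ∂P)
            + ∑' n : ℕ, ∫⁻ ω in A, ENNReal.ofReal (term (-((n:ℤ)+1)) ω) ∂P :=
          tsum_of_add_one_of_neg_add_one ENNReal.summable ENNReal.summable
      _ ≤ ENNReal.ofReal (2 * C) + 0 + ENNReal.ofReal (2 * C) := by
          apply add_le_add
          apply add_le_add
          · exact le_trans (ENNReal.tsum_le_tsum hTpos) (le_of_eq hhalf)
          · exact le_of_eq hT0
          · exact le_trans (ENNReal.tsum_le_tsum hTneg) (le_of_eq hhalf)
      _ = ENNReal.ofReal (4 * C) := by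
          rw [add_zero, ← ENNReal.ofReal_add (by linarith) (by linarith)]
          congr 1
          ring
  -- conclude
  by_cases hint : Integrable (fun ω => ∑' i : ℤ, term i ω) (P.restrict A)
  · rw [integral_eq_lintegral_of_nonneg_ae
      (ae_of_all _ (fun ω => tsum_nonneg (fun i => htermnn i ω))) hint.1]
    apply ENNReal.toReal_le_of_le_ofReal (by linarith)
    exact hkey
  · rw [integral_undef hint]
    linarith
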